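/- Let μ and ν be nice functions on ℝ, let Pⁿ be a subfamily of the sub-spherical family P_μ^n, and let Pᵐ be a completely monotone subfamily of the sub-spherical family P_ν^m. Let A be an r×n matrix, B an r×m matrix, and Θ a positive definite r×r matrix such that Θ² ⪰ AAᵀ, Θ² ⪰ BBᵀ, and AAᵀ + BBᵀ ≻ 0. Let ξ = Θ⁻¹[Aη + Bζ], where η ∼ p ∈ Pⁿ and ζ ∼ q ∈ Pᵐ are independent, and let γ(s) = ∫_{−∞}^∞ μ(s−r)ν(r)dr be the convolution μ⋆ν. Then γ is nice; for every unit vector e ∈ ℝʳ and every δ ≥ 0, Prob{e·ξ ≥ δ} ≤ ∫_δ^∞ γ(s)ds; the scalar random variable e·ξ has a symmetric (even) density; and consequently the distribution of ξ belongs to the sub-spherical family P_γ^r. -/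

import Mathlib

open MeasureTheory Matrix
open scoped Classical

noncomputable section

/-- `p` is a probability density on `ℝⁿ` (w.r.t. Lebesgue measure). -/
def IsDensity {n : ℕ} (p : (Fin n → ℝ) → ℝ) : Prop :=
  (∀ x, 0 ≤ p x) ∧ (∫ x, p x) = 1

/-- `p` is an even function on `ℝⁿ`. -/
def IsEvenFn {n : ℕ} (p : (Fin n → ℝ) → ℝ) : Prop := ∀ x, p (-x) = p x

/-- `γ` is a probability density on `ℝ`. -/
def IsDensity1 (γ : ℝ → ℝ) : Prop := (∀ s, 0 ≤ γ s) ∧ (∫ s, γ s) = 1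

/-- `γ` is an even probability density on `ℝ`, positive in a neighbourhood of `0`. -/
def IsSpec (γ : ℝ → ℝ) : Prop :=
  IsDensity1 γ ∧ (∀ s, γ (-s) = γ s) ∧ ∃ ε > 0, ∀ s, |s| < ε → 0 < γ s

/-- `P_γ(δ) = ∫_δ^∞ γ(s) ds`. -/
def tailP (γ : ℝ → ℝ) (δ : ℝ) : ℝ := ∫ s in Set.Ici δ, γ s

/-- Membership of the density `p` in the sub-spherical family `P_γ^n`. -/
def SubSpherical {n : ℕ} (γ : ℝ → ℝ) (p : (Fin n → ℝ) → ℝ) : Prop :=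
  IsDensity p ∧ IsEvenFn p ∧
  ∀ e : Fin n → ℝ, e ⬝ᵥ e = 1 → ∀ δ : ℝ, 0 ≤ δ →
    (∫ ξ in {ξ | δ ≤ e ⬝ᵥ ξ}, p ξ) ≤ tailP γ δ

/-- The measure on `ℝⁿ` with density `p` w.r.t. Lebesgue measure. -/
def dMeas {n : ℕ} (p : (Fin n → ℝ) → ℝ) : Measure (Fin n → ℝ) :=
  volume.withDensity fun x => ENNReal.ofReal (p x)

/-- The measure on `ℝ` with density `γ` w.r.t. Lebesgue measure. -/
def dMeas1 (γ : ℝ → ℝ) : Measure ℝ :=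
  volume.withDensity fun s => ENNReal.ofReal (γ s)

/-- A nice function: an even probability density on `ℝ`, continuous and nonincreasing on `[0,∞)`. -/
def Nice (f : ℝ → ℝ) : Prop :=
  IsDensity1 f ∧ (∀ s, f (-s) = f s) ∧ Continuous f ∧ AntitoneOn f (Set.Ici 0)

/-- `P` is a completely monotone subfamily of the sub-spherical family `P_γ^n`. -/
def CompMonotone {n : ℕ} (γ : ℝ → ℝ) (P : Set ((Fin n → ℝ) → ℝ)) : Prop :=
  Nice γ ∧ (∀ p ∈ P, SubSpherical γ p) ∧
  ∀ p ∈ P, ∀ e : Fin n → ℝ, e ⬝ᵥ e = 1 →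
    ∃ f : ℝ → ℝ, Nice f ∧ Measure.map (fun ξ => e ⬝ᵥ ξ) (dMeas p) = dMeas1 f

/-- Convolution of two functions on `ℝ`. -/
def convol (f g : ℝ → ℝ) : ℝ → ℝ := fun s => ∫ r, f (s - r) * g r

namespace S3

/-! ### Basic utilities -/

lemma integrable_of_integral_one {α : Type*} [MeasurableSpace α] {μ : Measure α} {f : α → ℝ}
    (h : (∫ x, f x ∂μ) = 1) : Integrable f μ := by
  by_contra hi
  rw [integral_undef hi] at h
  norm_num at h

lemma isProb_withDensity {α : Type*} [MeasurableSpace α] {μ : Measure α} {f : α → ℝ}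
    (h0 : ∀ x, 0 ≤ f x) (h1 : (∫ x, f x ∂μ) = 1) :
    IsProbabilityMeasure (μ.withDensity fun x => ENNReal.ofReal (f x)) := by
  constructor
  rw [withDensity_apply _ MeasurableSet.univ, Measure.restrict_univ,
    ← ofReal_integral_eq_lintegral_ofReal (integrable_of_integral_one h1)
      (Filter.Eventually.of_forall h0), h1, ENNReal.ofReal_one]

lemma withDensity_apply_ofReal {α : Type*} [MeasurableSpace α] {μ : Measure α} {f : α → ℝ}
    (h0 : ∀ x, 0 ≤ f x) (h1 : Integrable f μ) {s : Set α} (hs : MeasurableSet s) :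
    (μ.withDensity fun x => ENNReal.ofReal (f x)) s = ENNReal.ofReal (∫ x in s, f x ∂μ) := by
  rw [withDensity_apply _ hs,
    ofReal_integral_eq_lintegral_ofReal h1.restrict (Filter.Eventually.of_forall h0)]

/-- map of a `withDensity` under negation. -/
lemma map_neg_withDensity {α : Type*} [MeasurableSpace α] [SubtractionMonoid α] [MeasurableNeg α]
    {μ : Measure α} [μ.IsNegInvariant] {f : α → ENNReal} (hf : AEMeasurable f μ) :
    Measure.map (fun x => -x) (μ.withDensity f) = μ.withDensity (fun x => f (-x)) := by
  have hneg : MeasurePreserving (fun x : α => -x) μ μ := Measure.measurePreserving_neg μ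
  have hmk : μ.withDensity f = μ.withDensity (hf.mk f) := withDensity_congr_ae hf.ae_eq_mk
  have hmk2 : μ.withDensity (fun x => f (-x)) = μ.withDensity (fun x => hf.mk f (-x)) := by
    refine withDensity_congr_ae ?_
    have := hneg.quasiMeasurePreserving.ae_eq_comp hf.ae_eq_mk
    exact this
  rw [hmk, hmk2]
  have hm : Measurable (hf.mk f) := hf.measurable_mk
  ext s hs
  rw [Measure.map_apply measurable_neg hs, withDensity_apply _ (hs.preimage measurable_neg),
    withDensity_apply _ hs, ← lintegral_indicator (hs.preimage measurable_neg),
    ← lintegral_indicator hs]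
  have key : ∀ x : α, ((fun x : α => -x) ⁻¹' s).indicator (hf.mk f) x
      = s.indicator (fun y => hf.mk f (-y)) (-x) := by
    intro x
    by_cases hx : -x ∈ s <;>
      simp [Set.indicator, Set.mem_preimage, hx]
  calc ∫⁻ x, ((fun x : α => -x) ⁻¹' s).indicator (hf.mk f) x ∂μ
      = ∫⁻ x, s.indicator (fun y => hf.mk f (-y)) (-x) ∂μ := by
        exact lintegral_congr key
    _ = ∫⁻ x, s.indicator (fun y => hf.mk f (-y)) x ∂μ := by
        exact hneg.lintegral_comp ((hm.comp measurable_neg).indicator hs)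

/-- Preimage of a null set under a "linear" surjection with right inverse is null. -/
lemma null_preimage {E F : Type*} [MeasurableSpace E] [MeasurableSpace F]
    [AddCommGroup E] [AddCommGroup F] [MeasurableAdd₂ E] [MeasurableAdd₂ F]
    (μE : Measure E) (μF : Measure F) [SigmaFinite μE] [SigmaFinite μF]
    [μE.IsAddLeftInvariant] [μF.IsAddLeftInvariant]
    (hF0 : μF Set.univ ≠ 0)
    {T : E → F} {S : F → E} (hT : Measurable T) (hS : Measurable S)
    (hTadd : ∀ x y, T (x + y) = T x + T y) (hTS : ∀ v, T (S v) = v)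
    {N : Set F} (hN : μF N = 0) : μE (T ⁻¹' N) = 0 := by
  obtain ⟨N', hNN', hN'm, hN'0⟩ := exists_measurable_superset_of_null hN
  have main : μE (T ⁻¹' N') = 0 := by
    have hmeas : MeasurableSet {z : E × F | T z.1 + z.2 ∈ N'} :=
      ((hT.comp measurable_fst).add measurable_snd) hN'm
    have hP : (μE.prod μF) {z : E × F | T z.1 + z.2 ∈ N'} = 0 := by
      rw [Measure.prod_apply hmeas]
      have hz : ∀ x : E, μF (Prod.mk x ⁻¹' {z : E × F | T z.1 + z.2 ∈ N'}) = 0 := by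
        intro x
        have hset : Prod.mk x ⁻¹' {z : E × F | T z.1 + z.2 ∈ N'}
            = (fun v => T x + v) ⁻¹' N' := rfl
        rw [hset, measure_preimage_add]
        exact hN'0
      simp only [lintegral_congr hz, lintegral_zero]
    have key : (μE.prod μF) {z : E × F | T z.1 + z.2 ∈ N'} = μE (T ⁻¹' N') * μF Set.univ := by
      rw [Measure.prod_apply_symm hmeas]
      have hz : ∀ v : F, μE ((fun x => (x, v)) ⁻¹' {z : E × F | T z.1 + z.2 ∈ N'})
          = μE (T ⁻¹' N') := by
        intro v
        have h1 : ((fun x : E => (x, v)) ⁻¹' {z : E × F | T z.1 + z.2 ∈ N'})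
            = (fun x : E => S v + x) ⁻¹' (T ⁻¹' N') := by
          ext x
          simp only [Set.mem_preimage, Set.mem_setOf_eq]
          rw [hTadd, hTS, add_comm (v) (T x)]
        rw [h1, measure_preimage_add]
      rw [lintegral_congr hz, lintegral_const, mul_comm]
    rw [key] at hP
    rcases mul_eq_zero.1 hP with h | h
    · exact h
    · exact absurd h hF0
  exact measure_mono_null (Set.preimage_mono hNN') main

/-- From an absolutely continuous symmetric probability measure, extract an even
pointwise-nonnegative density. -/
lemma exists_even_density {α : Type*} [MeasurableSpace α] [AddGroup α] [MeasurableNeg α]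
    (vol : Measure α) [SigmaFinite vol] [vol.IsNegInvariant]
    (L : Measure α) [IsProbabilityMeasure L]
    (hac : L ≪ vol) (hsym : Measure.map (fun x => -x) L = L) :
    ∃ ρ : α → ℝ, Measurable ρ ∧ (∀ x, 0 ≤ ρ x) ∧ (∀ x, ρ (-x) = ρ x) ∧
      (∫ x, ρ x ∂vol) = 1 ∧ L = vol.withDensity (fun x => ENNReal.ofReal (ρ x)) := by
  set d := L.rnDeriv vol with hd_def
  have hd : Measurable d := Measure.measurable_rnDeriv L vol
  have hwd : vol.withDensity d = L := Measure.withDensity_rnDeriv_eq L vol hac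
  have hlt : ∀ᵐ x ∂vol, d x < ⊤ := Measure.rnDeriv_lt_top L vol
  have hfin : ∫⁻ x, d x ∂vol ≠ ⊤ := by
    have : ∫⁻ x, d x ∂vol = L Set.univ := by
      rw [← hwd, withDensity_apply _ MeasurableSet.univ, Measure.restrict_univ]
    rw [this, measure_univ]
    exact ENNReal.one_ne_top
  have hneg : MeasurePreserving (fun x : α => -x) vol vol := Measure.measurePreserving_neg vol
  have hsymd : vol.withDensity (fun x => d (-x)) = vol.withDensity d := by
    rw [← map_neg_withDensity hd.aemeasurable, hwd, hsym]
  have hfin' : ∫⁻ x, d (-x) ∂vol ≠ ⊤ := by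
    rw [hneg.lintegral_comp hd]; exact hfin
  have hae : (fun x => d (-x)) =ᵐ[vol] d :=
    (withDensity_eq_iff (hd.comp measurable_neg).aemeasurable hd.aemeasurable hfin').1 hsymd
  refine ⟨fun x => ((d x).toReal + (d (-x)).toReal) / 2, ?_, ?_, ?_, ?_, ?_⟩
  · exact ((hd.ennreal_toReal).add ((hd.comp measurable_neg).ennreal_toReal)).div_const 2
  · intro x; positivity
  · intro x; simp only []; rw [neg_neg]; ring
  · have hρae : (fun x => ((d x).toReal + (d (-x)).toReal) / 2) =ᵐ[vol]
        fun x => (d x).toReal := by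
      filter_upwards [hae] with x hx
      rw [hx]; ring
    rw [integral_congr_ae hρae, Measure.integral_toReal_rnDeriv hac]
    simp
  · have h2 : (fun x => ENNReal.ofReal (((d x).toReal + (d (-x)).toReal) / 2)) =ᵐ[vol] d := by
      filter_upwards [hae, hlt] with x hx hx2
      rw [hx]
      have : ((d x).toReal + (d x).toReal) / 2 = (d x).toReal := by ring
      rw [this, ENNReal.ofReal_toReal hx2.ne]
    rw [← hwd]
    exact (withDensity_congr_ae h2).symm

/-! ### Symmetric measures on ℝ -/

lemma meas_tail_monotone (κ : Measure ℝ) (δ : ℝ) :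
    Monotone (fun x : ℝ => κ (Set.Ici (δ - x))) := by
  intro x₁ x₂ h
  exact measure_mono (Set.Ici_subset_Ici.2 (by linarith))

lemma meas_tail_antitone (κ : Measure ℝ) (δ : ℝ) :
    Antitone (fun x : ℝ => κ (Set.Ici (δ + x))) := by
  intro x₁ x₂ h
  exact measure_mono (Set.Ici_subset_Ici.2 (by linarith))

lemma symm_Iic {ϑ : Measure ℝ} (hϑ : Measure.map (fun x : ℝ => -x) ϑ = ϑ) (c : ℝ) :
    ϑ (Set.Iic (-c)) = ϑ (Set.Ici c) := by
  conv_lhs => rw [← hϑ]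
  rw [Measure.map_apply measurable_neg measurableSet_Iic]
  congr 1
  ext x
  simp only [Set.mem_preimage, Set.mem_Iic, Set.mem_Ici]
  constructor <;> intro h <;> linarith

lemma symm_Iio {ϑ : Measure ℝ} (hϑ : Measure.map (fun x : ℝ => -x) ϑ = ϑ) (c : ℝ) :
    ϑ (Set.Iio (-c)) = ϑ (Set.Ioi c) := by
  conv_lhs => rw [← hϑ]
  rw [Measure.map_apply measurable_neg measurableSet_Iio]
  congr 1
  ext x
  simp only [Set.mem_preimage, Set.mem_Iio, Set.mem_Ioi]
  constructor <;> intro h <;> linarith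

/-- A symmetric probability measure with no atom at 0 gives mass 1/2 to `[0, ∞)`. -/
lemma symm_Ici_zero {ϑ : Measure ℝ} [IsProbabilityMeasure ϑ]
    (hϑ : Measure.map (fun x : ℝ => -x) ϑ = ϑ) (h0 : ϑ {(0:ℝ)} = 0) :
    ϑ (Set.Ici (0:ℝ)) = 1/2 := by
  have hsplit : ϑ (Set.Ici (0:ℝ)) + ϑ (Set.Iio (0:ℝ)) = 1 := by
    rw [← measure_union (by
      intro s hs1 hs2 x hx
      have h1 := hs1 hx; have h2 := hs2 hx
      simp only [Set.mem_Ici, Set.mem_Iio] at h1 h2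
      exact absurd h1 (not_le.2 h2)) measurableSet_Iio]
    rw [Set.union_comm, Set.Iio_union_Ici, measure_univ]
  have hIoi : ϑ (Set.Ici (0:ℝ)) = ϑ (Set.Ioi (0:ℝ)) := by
    have : Set.Ici (0:ℝ) = {(0:ℝ)} ∪ Set.Ioi 0 := by
      ext x; simp only [Set.mem_Ici, Set.mem_union, Set.mem_singleton_iff, Set.mem_Ioi]
      constructor
      · intro h; rcases eq_or_lt_of_le h with h' | h'
        · exact Or.inl h'.symm
        · exact Or.inr h'
      · rintro (h | h) <;> simp [h, le_of_lt]
    rw [this, measure_union (by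
      intro s hs1 hs2 x hx
      have h1 := hs1 hx; have h2 := hs2 hx
      simp only [Set.mem_singleton_iff] at h1
      simp only [Set.mem_Ioi] at h2
      subst h1; exact lt_irrefl _ h2) measurableSet_Ioi, h0, zero_add]
  have hIio : ϑ (Set.Iio (0:ℝ)) = ϑ (Set.Ioi (0:ℝ)) := by
    have := symm_Iio hϑ 0
    simpa using this
  have h2 : ϑ (Set.Ici (0:ℝ)) + ϑ (Set.Ici (0:ℝ)) = 1 := by
    rw [hsplit.symm, hIoi, hIio]
  have := h2
  rw [← two_mul] at this
  rw [ENNReal.eq_div_iff (by norm_num) (by norm_num)]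
  exact this

/-- Key comparison lemma: layer-cake stochastic dominance for symmetric measures against
a symmetric "unimodal" kernel. -/
lemma lemA {δ : ℝ} (σ τ κ : Measure ℝ)
    [IsProbabilityMeasure σ] [IsProbabilityMeasure τ] [IsProbabilityMeasure κ]
    (hσ : Measure.map (fun x : ℝ => -x) σ = σ) (hτ : Measure.map (fun x : ℝ => -x) τ = τ)
    (hτa : ∀ x : ℝ, τ {x} = 0)
    (tails : ∀ s : ℝ, 0 < s → σ (Set.Ici s) ≤ τ (Set.Ici s))
    (hmono : MonotoneOn (fun x => κ (Set.Ici (δ - x)) + κ (Set.Ici (δ + x))) (Set.Ici (0:ℝ))) :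
    ∫⁻ x, κ (Set.Ici (δ - x)) ∂σ ≤ ∫⁻ x, κ (Set.Ici (δ - x)) ∂τ := by
  set H : ℝ → ENNReal := fun x => κ (Set.Ici (δ - x)) + κ (Set.Ici (δ + x)) with hH
  have Heven : ∀ x, H (-x) = H x := by
    intro x
    simp only [hH, sub_neg_eq_add, ← sub_eq_add_neg]
    exact add_comm (κ (Set.Ici (δ + x))) (κ (Set.Ici (δ - x)))
  have Hmeas : Measurable H :=
    ((meas_tail_monotone κ δ).measurable).add ((meas_tail_antitone κ δ).measurable)
  have Hbound : ∀ x, H x ≤ 2 := by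
    intro x
    calc H x ≤ 1 + 1 := add_le_add prob_le_one prob_le_one
    _ = 2 := one_add_one_eq_two
  have Hne : ∀ x, H x ≠ ⊤ := fun x => (lt_of_le_of_lt (Hbound x) (by norm_num)).ne
  have doubling : ∀ (ϑ : Measure ℝ), Measure.map (fun x : ℝ => -x) ϑ = ϑ →
      ∫⁻ x, κ (Set.Ici (δ - x)) ∂ϑ + ∫⁻ x, κ (Set.Ici (δ - x)) ∂ϑ = ∫⁻ x, H x ∂ϑ := by
    intro ϑ hsy
    have h2 : ∫⁻ x, κ (Set.Ici (δ - x)) ∂ϑ = ∫⁻ x, κ (Set.Ici (δ + x)) ∂ϑ := by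
      conv_lhs => rw [← hsy]
      rw [lintegral_map (meas_tail_monotone κ δ).measurable measurable_neg]
      refine lintegral_congr fun x => ?_
      rw [sub_neg_eq_add]
    nth_rewrite 2 [h2]
    rw [← lintegral_add_left (meas_tail_monotone κ δ).measurable]
  have main : ∫⁻ x, H x ∂σ ≤ ∫⁻ x, H x ∂τ := by
    set Gr : ℝ → ℝ := fun x => (H x).toReal with hGr
    have hGrnn : ∀ x, 0 ≤ Gr x := fun x => ENNReal.toReal_nonneg
    have hGrmeas : Measurable Gr := Hmeas.ennreal_toReal
    have hGreven : ∀ x, Gr (-x) = Gr x := fun x => by rw [hGr]; simp only [Heven]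
    have hGrmono : MonotoneOn Gr (Set.Ici (0:ℝ)) := by
      intro x₁ h1 x₂ h2 h12
      exact ENNReal.toReal_mono (Hne x₂) (hmono h1 h2 h12)
    have habs : ∀ x, Gr x = Gr |x| := by
      intro x
      rcases abs_choice x with h | h
      · rw [h]
      · rw [h, hGreven]
    have hofReal : ∀ (ϑ : Measure ℝ), ∫⁻ x, H x ∂ϑ = ∫⁻ x, ENNReal.ofReal (Gr x) ∂ϑ := by
      intro ϑ
      refine lintegral_congr fun x => ?_
      rw [hGr, ENNReal.ofReal_toReal (Hne x)]
    rw [hofReal σ, hofReal τ,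
      lintegral_eq_lintegral_meas_lt σ (Filter.Eventually.of_forall hGrnn) hGrmeas.aemeasurable,
      lintegral_eq_lintegral_meas_lt τ (Filter.Eventually.of_forall hGrnn) hGrmeas.aemeasurable]
    refine lintegral_mono fun t => ?_
    rcases lt_or_ge t 0 with ht | ht
    · have huniv : ∀ (ϑ : Measure ℝ) , ϑ {a : ℝ | t < Gr a} = ϑ Set.univ := by
        intro ϑ; congr 1; ext a
        simp only [Set.mem_setOf_eq, Set.mem_univ, iff_true]
        exact lt_of_lt_of_le ht (hGrnn a)
      rw [huniv σ, huniv τ, measure_univ, measure_univ]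
    · by_cases hA : ∃ x : ℝ, 0 ≤ x ∧ t < Gr x
      · set A : Set ℝ := {x : ℝ | 0 ≤ x ∧ t < Gr x} with hAdef
        have hAne : A.Nonempty := hA
        have hAbdd : BddBelow A := ⟨0, fun x hx => hx.1⟩
        set c : ℝ := sInf A with hc
        have hc0 : 0 ≤ c := le_csInf hAne fun x hx => hx.1
        have sub1 : {a : ℝ | t < Gr a} ⊆ {a : ℝ | c ≤ |a|} := by
          intro a ha
          simp only [Set.mem_setOf_eq] at ha ⊢
          refine csInf_le hAbdd ?_
          exact ⟨abs_nonneg a, by rwa [← habs a]⟩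
        have sub2 : {a : ℝ | c < |a|} ⊆ {a : ℝ | t < Gr a} := by
          intro a ha
          simp only [Set.mem_setOf_eq] at ha ⊢
          obtain ⟨w, hw, hwa⟩ := exists_lt_of_csInf_lt hAne ha
          rw [habs a]
          exact lt_of_lt_of_le hw.2 (hGrmono hw.1 (abs_nonneg a) hwa.le)
        have step1 : σ {a : ℝ | t < Gr a} ≤ τ {a : ℝ | c ≤ |a|} := by
          refine le_trans (measure_mono sub1) ?_
          rcases eq_or_lt_of_le hc0 with hc' | hc'
          · have : {a : ℝ | c ≤ |a|} = Set.univ := by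
              ext a; simp only [Set.mem_setOf_eq, Set.mem_univ, iff_true, ← hc']
              exact abs_nonneg a
            rw [this]
            exact le_of_eq (by rw [measure_univ, measure_univ])
          · have hdecomp : ∀ (ϑ : Measure ℝ), Measure.map (fun x : ℝ => -x) ϑ = ϑ →
                ϑ {a : ℝ | c ≤ |a|} = ϑ (Set.Ici c) + ϑ (Set.Ici c) := by
              intro ϑ hsy
              have hset : {a : ℝ | c ≤ |a|} = Set.Iic (-c) ∪ Set.Ici c := by
                ext a
                simp only [Set.mem_setOf_eq, Set.mem_union, Set.mem_Iic, Set.mem_Ici]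
                rw [le_abs]
                constructor
                · rintro (h | h)
                  · exact Or.inr h
                  · exact Or.inl (by linarith)
                · rintro (h | h)
                  · exact Or.inr (by linarith)
                  · exact Or.inl h
              rw [hset, measure_union (by
                intro s hs1 hs2 x hx
                have h1 := hs1 hx; have h2 := hs2 hx
                simp only [Set.mem_Iic] at h1
                simp only [Set.mem_Ici] at h2
                have : c ≤ -c := le_trans h2 h1
                linarith) measurableSet_Ici, symm_Iic hsy]
            rw [hdecomp σ hσ, hdecomp τ hτ]
            exact add_le_add (tails c hc') (tails c hc')
        refine le_trans step1 ?_
        have step2 : τ {a : ℝ | c ≤ |a|} ≤ τ {a : ℝ | t < Gr a} := by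
          have hsplit : {a : ℝ | c ≤ |a|} ⊆ {a : ℝ | c < |a|} ∪ {c, -c} := by
            intro a ha
            simp only [Set.mem_setOf_eq] at ha
            rcases eq_or_lt_of_le ha with h | h
            · right
              rcases abs_choice a with h' | h'
              · left; rw [← h', ← h]
              · right
                have : a = -c := by rw [h, h']; ring
                simp [this]
            · left; exact h
          calc τ {a : ℝ | c ≤ |a|} ≤ τ ({a : ℝ | c < |a|} ∪ {c, -c}) := measure_mono hsplit
            _ ≤ τ {a : ℝ | c < |a|} + τ {c, -c} := measure_union_le _ _
            _ ≤ τ {a : ℝ | t < Gr a} + 0 := by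
                refine add_le_add (measure_mono sub2) (le_of_eq ?_)
                have : ({c, -c} : Set ℝ) = {c} ∪ {-c} := by rw [Set.insert_eq]
                rw [this]
                exact measure_union_null (hτa c) (hτa (-c))
            _ = τ {a : ℝ | t < Gr a} := add_zero _
        exact step2
      · have : {a : ℝ | t < Gr a} = ∅ := by
          ext a
          simp only [Set.mem_setOf_eq, Set.mem_empty_iff_false, iff_false, not_lt]
          by_contra h
          push_neg at h
          exact hA ⟨|a|, abs_nonneg a, by rwa [← habs a]⟩
        rw [this]
        simp
  have h2 : (2:ENNReal) * ∫⁻ x, κ (Set.Ici (δ - x)) ∂σ ≤ 2 * ∫⁻ x, κ (Set.Ici (δ - x)) ∂τ := by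
    rw [two_mul, two_mul, doubling σ hσ, doubling τ hτ]
    exact main
  exact (ENNReal.mul_le_mul_iff_right (by norm_num) (by norm_num)).1 h2

/-! ### Nice densities -/

lemma nice_integrable {f : ℝ → ℝ} (hf : Nice f) : Integrable f :=
  integrable_of_integral_one hf.1.2

lemma nice_pair {f : ℝ → ℝ} (hf : Nice f) {u v : ℝ} (h : |u| ≤ |v|) : f v ≤ f u := by
  have habs : ∀ x : ℝ, f x = f |x| := by
    intro x
    rcases abs_choice x with h' | h'
    · rw [h']
    · rw [h', hf.2.1]
  rw [habs u, habs v]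
  exact hf.2.2.2 (abs_nonneg u) (abs_nonneg v) h

lemma nice_le_zero {f : ℝ → ℝ} (hf : Nice f) (x : ℝ) : f x ≤ f 0 :=
  nice_pair hf (by simp)

lemma tailP_nonneg {γ : ℝ → ℝ} (h0 : ∀ s, 0 ≤ γ s) (δ : ℝ) : 0 ≤ tailP γ δ :=
  setIntegral_nonneg measurableSet_Ici fun s _ => h0 s

lemma tailP_antitone {γ : ℝ → ℝ} (h : IsDensity1 γ) : Antitone (tailP γ) := by
  intro δ₁ δ₂ h12
  refine setIntegral_mono_set (integrable_of_integral_one h.2).integrableOn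
    (Filter.Eventually.of_forall fun s => h.1 s) ?_
  exact Filter.Eventually.of_forall fun s hs => le_trans h12 hs

lemma tailP_le_one {γ : ℝ → ℝ} (h : IsDensity1 γ) (δ : ℝ) : tailP γ δ ≤ 1 := by
  rw [← h.2]
  exact setIntegral_le_integral (integrable_of_integral_one h.2)
    (Filter.Eventually.of_forall fun s => h.1 s)

lemma dMeas1_apply {γ : ℝ → ℝ} (h : IsDensity1 γ) {s : Set ℝ} (hs : MeasurableSet s) :
    dMeas1 γ s = ENNReal.ofReal (∫ t in s, γ t) := by
  rw [dMeas1, withDensity_apply _ hs,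
    ofReal_integral_eq_lintegral_ofReal (integrable_of_integral_one h.2).restrict
      (Filter.Eventually.of_forall h.1)]

lemma dMeas1_Ici {γ : ℝ → ℝ} (h : IsDensity1 γ) (δ : ℝ) :
    dMeas1 γ (Set.Ici δ) = ENNReal.ofReal (tailP γ δ) :=
  dMeas1_apply h measurableSet_Ici

lemma dMeas1_isProb {γ : ℝ → ℝ} (h : IsDensity1 γ) : IsProbabilityMeasure (dMeas1 γ) := by
  constructor
  rw [dMeas1_apply h MeasurableSet.univ, Measure.restrict_univ, h.2, ENNReal.ofReal_one]

lemma dMeas1_singleton (γ : ℝ → ℝ) (x : ℝ) : dMeas1 γ {x} = 0 :=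
  (withDensity_absolutelyContinuous volume _) (Real.volume_singleton)

/-- monotonicity of the symmetrized tail function for a nice density. -/
lemma Hmono_nice {f : ℝ → ℝ} (hf : Nice f) {δ : ℝ} (hδ : 0 ≤ δ) :
    MonotoneOn (fun x => dMeas1 f (Set.Ici (δ - x)) + dMeas1 f (Set.Ici (δ + x)))
      (Set.Ici (0:ℝ)) := by
  intro x₁ hx₁ x₂ hx₂ h12
  simp only [Set.mem_Ici] at hx₁ hx₂
  set κ := dMeas1 f with hκ
  have hmf : Measurable fun t => ENNReal.ofReal (f t) :=
    ENNReal.measurable_ofReal.comp hf.2.2.1.measurable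
  have key : κ (Set.Ico (δ + x₁) (δ + x₂)) ≤ κ (Set.Ico (δ - x₂) (δ - x₁)) := by
    have h1 : κ (Set.Ico (δ + x₁) (δ + x₂)) = ∫⁻ t in Set.Ico (δ + x₁) (δ + x₂),
        ENNReal.ofReal (f t) := by
      rw [hκ, dMeas1, withDensity_apply _ measurableSet_Ico]
    have hmp : MeasurePreserving (fun t : ℝ => 2*δ - t) volume volume :=
      Measure.measurePreserving_sub_left volume (2*δ)
    have h2 : ∫⁻ t in Set.Ico (δ + x₁) (δ + x₂), ENNReal.ofReal (f t) ∂volume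
        = ∫⁻ t in Set.Ioc (δ - x₂) (δ - x₁), ENNReal.ofReal (f (2*δ - t)) ∂volume := by
      rw [← lintegral_indicator measurableSet_Ico, ← lintegral_indicator measurableSet_Ioc]
      rw [← hmp.lintegral_comp ((hmf.indicator measurableSet_Ico))]
      refine lintegral_congr fun t => ?_
      by_cases hmem : 2*δ - t ∈ Set.Ico (δ + x₁) (δ + x₂)
      · have hmem' : t ∈ Set.Ioc (δ - x₂) (δ - x₁) := by
          simp only [Set.mem_Ico] at hmem
          simp only [Set.mem_Ioc]
          constructor <;> linarith [hmem.1, hmem.2]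
        simp [Set.indicator, hmem, hmem']
      · have hmem' : t ∉ Set.Ioc (δ - x₂) (δ - x₁) := by
          simp only [Set.mem_Ico, not_and_or, not_le, not_lt] at hmem
          simp only [Set.mem_Ioc, not_and_or, not_le, not_lt]
          rcases hmem with h | h
          · right; linarith
          · left; linarith
        simp [Set.indicator, hmem, hmem']
    have h3 : ∫⁻ t in Set.Ioc (δ - x₂) (δ - x₁), ENNReal.ofReal (f (2*δ - t)) ∂volume
        ≤ ∫⁻ t in Set.Ioc (δ - x₂) (δ - x₁), ENNReal.ofReal (f t) ∂volume := by
      refine setLIntegral_mono hmf fun t ht => ?_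
      simp only [Set.mem_Ioc] at ht
      refine ENNReal.ofReal_le_ofReal (nice_pair hf ?_)
      rw [abs_of_nonneg (by linarith [ht.2, hx₁] : (0:ℝ) ≤ 2*δ - t)]
      rw [abs_le]
      constructor <;> linarith [ht.2, hx₁, hδ]
    have h4 : ∫⁻ t in Set.Ioc (δ - x₂) (δ - x₁), ENNReal.ofReal (f t) ∂volume
        ≤ κ (Set.Ico (δ - x₂) (δ - x₁)) := by
      have heq : (∫⁻ t in Set.Ioc (δ - x₂) (δ - x₁), ENNReal.ofReal (f t) ∂volume)
          = κ (Set.Ioc (δ - x₂) (δ - x₁)) := by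
        rw [hκ, dMeas1, withDensity_apply _ measurableSet_Ioc]
      rw [heq]
      have hsub : Set.Ioc (δ - x₂) (δ - x₁) ⊆ Set.Ico (δ - x₂) (δ - x₁) ∪ {δ - x₁} := by
        intro t ht
        simp only [Set.mem_Ioc] at ht
        rcases lt_or_eq_of_le ht.2 with h | h
        · left; exact ⟨le_of_lt ht.1, h⟩
        · right; simp [h]
      calc κ (Set.Ioc (δ - x₂) (δ - x₁)) ≤ κ (Set.Ico (δ - x₂) (δ - x₁) ∪ {δ - x₁}) :=
            measure_mono hsub
        _ ≤ κ (Set.Ico (δ - x₂) (δ - x₁)) + κ {δ - x₁} := measure_union_le _ _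
        _ = κ (Set.Ico (δ - x₂) (δ - x₁)) := by rw [dMeas1_singleton, add_zero]
    exact le_trans (le_of_eq (h1.trans h2)) (le_trans h3 h4)
  have d1 : κ (Set.Ici (δ - x₂)) = κ (Set.Ico (δ - x₂) (δ - x₁)) + κ (Set.Ici (δ - x₁)) := by
    rw [← measure_union (by
      intro s hs1 hs2 x hx
      have h1 := hs1 hx; have h2 := hs2 hx
      simp only [Set.mem_Ico] at h1
      simp only [Set.mem_Ici] at h2
      exact absurd h2 (not_le.2 h1.2)) measurableSet_Ici]
    rw [Set.Ico_union_Ici_eq_Ici (by linarith)]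
  have d2 : κ (Set.Ici (δ + x₁)) = κ (Set.Ico (δ + x₁) (δ + x₂)) + κ (Set.Ici (δ + x₂)) := by
    rw [← measure_union (by
      intro s hs1 hs2 x hx
      have h1 := hs1 hx; have h2 := hs2 hx
      simp only [Set.mem_Ico] at h1
      simp only [Set.mem_Ici] at h2
      exact absurd h2 (not_le.2 h1.2)) measurableSet_Ici]
    rw [Set.Ico_union_Ici_eq_Ici (by linarith)]
  simp only
  rw [d2, d1]
  calc κ (Set.Ici (δ - x₁)) + (κ (Set.Ico (δ + x₁) (δ + x₂)) + κ (Set.Ici (δ + x₂)))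
      ≤ κ (Set.Ici (δ - x₁)) + (κ (Set.Ico (δ - x₂) (δ - x₁)) + κ (Set.Ici (δ + x₂))) := by
        exact add_le_add_right (add_le_add_left key _) _
    _ = κ (Set.Ico (δ - x₂) (δ - x₁)) + κ (Set.Ici (δ - x₁)) + κ (Set.Ici (δ + x₂)) := by ring

/-! ### Convolution -/

lemma setIntegral_convol {μ ν : ℝ → ℝ} (hμ : Nice μ) (hν : Nice ν) (S : Set ℝ) :
    ∫ s in S, convol μ ν s = ∫ v, (∫ s in S, μ (s - v)) * ν v := by
  have hμc := hμ.2.2.1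
  have hνc := hν.2.2.1
  set F : ℝ × ℝ → ℝ := fun z => μ (z.1 - z.2) * ν z.2 with hF
  have hFc : Continuous F := (hμc.comp (continuous_fst.sub continuous_snd)).mul
    (hνc.comp continuous_snd)
  have hFnn : ∀ z, 0 ≤ F z := fun z => mul_nonneg (hμ.1.1 _) (hν.1.1 _)
  have hmf : Measurable fun t : ℝ => ENNReal.ofReal (μ t) :=
    ENNReal.measurable_ofReal.comp hμc.measurable
  have hμ1 : ∫⁻ t, ENNReal.ofReal (μ t) = 1 := by
    rw [← ofReal_integral_eq_lintegral_ofReal (nice_integrable hμ)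
      (Filter.Eventually.of_forall hμ.1.1), hμ.1.2, ENNReal.ofReal_one]
  have hν1 : ∫⁻ t, ENNReal.ofReal (ν t) = 1 := by
    rw [← ofReal_integral_eq_lintegral_ofReal (nice_integrable hν)
      (Filter.Eventually.of_forall hν.1.1), hν.1.2, ENNReal.ofReal_one]
  have hInt : Integrable F ((volume.restrict S).prod volume) := by
    refine ⟨hFc.aestronglyMeasurable, ?_⟩
    rw [hasFiniteIntegral_iff_ofReal (Filter.Eventually.of_forall hFnn)]
    have hFmeas : Measurable fun z : ℝ × ℝ => ENNReal.ofReal (F z) :=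
      ENNReal.measurable_ofReal.comp hFc.measurable
    rw [lintegral_prod_symm' _ hFmeas]
    have hbound : ∀ v : ℝ, (∫⁻ s in S, ENNReal.ofReal (F (s, v)) ∂volume)
        ≤ ENNReal.ofReal (ν v) := by
      intro v
      have heq : ∀ s : ℝ, ENNReal.ofReal (F (s, v))
          = ENNReal.ofReal (μ (s - v)) * ENNReal.ofReal (ν v) := by
        intro s
        rw [hF, ENNReal.ofReal_mul (hμ.1.1 _)]
      calc (∫⁻ s in S, ENNReal.ofReal (F (s, v)) ∂volume)
          = ∫⁻ s in S, ENNReal.ofReal (μ (s - v)) * ENNReal.ofReal (ν v) ∂volume := by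
            exact lintegral_congr heq
        _ ≤ ∫⁻ s, ENNReal.ofReal (μ (s - v)) * ENNReal.ofReal (ν v) ∂volume :=
            setLIntegral_le_lintegral _ _
        _ = (∫⁻ s, ENNReal.ofReal (μ (s - v)) ∂volume) * ENNReal.ofReal (ν v) :=
            lintegral_mul_const _ (hmf.comp (measurable_id.sub measurable_const))
        _ = 1 * ENNReal.ofReal (ν v) := by
            rw [(measurePreserving_sub_right volume v).lintegral_comp hmf, hμ1]
        _ = ENNReal.ofReal (ν v) := one_mul _
    calc ∫⁻ v, ∫⁻ s in S, ENNReal.ofReal (F (s, v)) ∂volume ∂volume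
        ≤ ∫⁻ v, ENNReal.ofReal (ν v) ∂volume := lintegral_mono hbound
      _ = 1 := hν1
      _ < ⊤ := ENNReal.one_lt_top
  have hswap := integral_integral_swap (f := fun s v => μ (s - v) * ν v) hInt
  calc ∫ s in S, convol μ ν s = ∫ v, ∫ s in S, μ (s - v) * ν v ∂volume ∂volume := hswap
    _ = ∫ v, (∫ s in S, μ (s - v)) * ν v := by
        refine integral_congr_ae (Filter.Eventually.of_forall fun v => ?_)
        exact integral_mul_const (ν v) _

lemma setIntegral_shift (μ : ℝ → ℝ) (δ v : ℝ) :
    ∫ s in Set.Ici δ, μ (s - v) = tailP μ (δ - v) := by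
  have hemb : MeasurableEmbedding (fun x : ℝ => x - v) :=
    (MeasurableEquiv.subRight v).measurableEmbedding
  have hmp : MeasurePreserving (fun x : ℝ => x - v) volume volume :=
    measurePreserving_sub_right volume v
  have hset : (fun x : ℝ => x - v) ⁻¹' (Set.Ici (δ - v)) = Set.Ici δ := by
    ext x
    simp only [Set.mem_preimage, Set.mem_Ici]
    constructor <;> intro h <;> linarith
  have := hmp.setIntegral_preimage_emb hemb μ (Set.Ici (δ - v))
  rw [hset] at this
  exact this

lemma convol_nonneg {μ ν : ℝ → ℝ} (hμ : Nice μ) (hν : Nice ν) (s : ℝ) :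
    0 ≤ convol μ ν s :=
  integral_nonneg fun r => mul_nonneg (hμ.1.1 _) (hν.1.1 _)

lemma convol_even {μ ν : ℝ → ℝ} (hμ : Nice μ) (hν : Nice ν) (s : ℝ) :
    convol μ ν (-s) = convol μ ν s := by
  have key : ∀ r : ℝ, μ (-s - (-r)) * ν (-r) = μ (s - r) * ν r := by
    intro r
    have h1 : -s - (-r) = -(s - r) := by ring
    rw [h1, hμ.2.1, hν.2.1]
  calc convol μ ν (-s) = ∫ r, (fun r => μ (-s - r) * ν r) (-r) :=
        (integral_neg_eq_self _ _).symm
    _ = ∫ r, μ (s - r) * ν r := by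
        refine integral_congr_ae (Filter.Eventually.of_forall fun r => ?_)
        exact key r
    _ = convol μ ν s := rfl

lemma convol_continuous {μ ν : ℝ → ℝ} (hμ : Nice μ) (hν : Nice ν) :
    Continuous (convol μ ν) := by
  refine continuous_of_dominated (bound := fun r => μ 0 * ν r) ?_ ?_ ?_ ?_
  · intro s
    exact ((hμ.2.2.1.comp (continuous_const.sub continuous_id)).mul
      hν.2.2.1).aestronglyMeasurable
  · intro s
    refine Filter.Eventually.of_forall fun r => ?_
    rw [Real.norm_eq_abs, abs_of_nonneg (mul_nonneg (hμ.1.1 _) (hν.1.1 _))]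
    exact mul_le_mul_of_nonneg_right (nice_le_zero hμ _) (hν.1.1 r)
  · exact (nice_integrable hν).const_mul _
  · refine Filter.Eventually.of_forall fun r => ?_
    exact (hμ.2.2.1.comp (continuous_id.sub continuous_const)).mul continuous_const

lemma convol_integral_one {μ ν : ℝ → ℝ} (hμ : Nice μ) (hν : Nice ν) :
    (∫ s, convol μ ν s) = 1 := by
  have h := setIntegral_convol hμ hν Set.univ
  rw [Measure.restrict_univ] at h
  rw [h]
  have key : ∀ v : ℝ, (∫ s, μ (s - v)) * ν v = ν v := by
    intro v
    rw [integral_sub_right_eq_self μ v, hμ.1.2, one_mul]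
  rw [integral_congr_ae (Filter.Eventually.of_forall key), hν.1.2]

lemma tailP_convol {μ ν : ℝ → ℝ} (hμ : Nice μ) (hν : Nice ν) (δ : ℝ) :
    tailP (convol μ ν) δ = ∫ v, tailP μ (δ - v) * ν v := by
  rw [tailP, setIntegral_convol hμ hν (Set.Ici δ)]
  refine integral_congr_ae (Filter.Eventually.of_forall fun v => ?_)
  show (∫ s in Set.Ici δ, μ (s - v)) * ν v = tailP μ (δ - v) * ν v
  rw [setIntegral_shift μ δ v]

lemma abs_le_abs_of_sq {x y : ℝ} (h : x^2 ≤ y^2) : |x| ≤ |y| := by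
  nlinarith [abs_nonneg x, abs_nonneg y, sq_abs x, sq_abs y]

lemma convol_antitone {μ ν : ℝ → ℝ} (hμ : Nice μ) (hν : Nice ν) :
    AntitoneOn (convol μ ν) (Set.Ici (0:ℝ)) := by
  intro s₁ hs₁ s₂ hs₂ h12
  simp only [Set.mem_Ici] at hs₁ hs₂
  set m := s₁ + s₂ with hm
  have hbd : ∀ (c : ℝ) (t : ℝ), ‖μ (c - t)‖ ≤ μ 0 := by
    intro c t
    rw [Real.norm_eq_abs, abs_of_nonneg (hμ.1.1 _)]
    exact nice_le_zero hμ _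
  have hint1 : Integrable (fun t => μ (s₁ - t) * ν t) :=
    Integrable.bdd_mul (nice_integrable hν)
      ((hμ.2.2.1.comp (continuous_const.sub continuous_id)).aestronglyMeasurable)
      (Filter.Eventually.of_forall (hbd s₁))
  have hint2 : Integrable (fun t => μ (s₂ - t) * ν t) :=
    Integrable.bdd_mul (nice_integrable hν)
      ((hμ.2.2.1.comp (continuous_const.sub continuous_id)).aestronglyMeasurable)
      (Filter.Eventually.of_forall (hbd s₂))
  have hintg : Integrable (fun t => (μ (s₁ - t) - μ (s₂ - t)) * ν t) := by
    refine (hint1.sub hint2).congr (Filter.Eventually.of_forall fun t => ?_)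
    show μ (s₁ - t) * ν t - μ (s₂ - t) * ν t = (μ (s₁ - t) - μ (s₂ - t)) * ν t
    ring
  have hintν' : Integrable (fun t => ν (m - t)) := (nice_integrable hν).comp_sub_left m
  have hinth : Integrable (fun t => (μ (s₂ - t) - μ (s₁ - t)) * ν (m - t)) := by
    refine Integrable.bdd_mul (c := 2 * μ 0) hintν' ?_ (Filter.Eventually.of_forall ?_)
    · exact ((hμ.2.2.1.comp (continuous_const.sub continuous_id)).sub
        (hμ.2.2.1.comp (continuous_const.sub continuous_id))).aestronglyMeasurable
    · intro t
      rw [Real.norm_eq_abs]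
      have h1 : 0 ≤ μ (s₂ - t) := hμ.1.1 _
      have h2 : 0 ≤ μ (s₁ - t) := hμ.1.1 _
      have h3 : μ (s₂ - t) ≤ μ 0 := nice_le_zero hμ _
      have h4 : μ (s₁ - t) ≤ μ 0 := nice_le_zero hμ _
      rw [abs_le]
      constructor <;> linarith
  have hswap : (∫ t, (μ (s₁ - t) - μ (s₂ - t)) * ν t)
      = ∫ t, (μ (s₂ - t) - μ (s₁ - t)) * ν (m - t) := by
    have hsl := integral_sub_left_eq_self (fun t => (μ (s₁ - t) - μ (s₂ - t)) * ν t) volume m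
    rw [← hsl]
    refine integral_congr_ae (Filter.Eventually.of_forall fun t => ?_)
    have e1 : s₁ - (m - t) = -(s₂ - t) := by rw [hm]; ring
    have e2 : s₂ - (m - t) = -(s₁ - t) := by rw [hm]; ring
    show (μ (s₁ - (m - t)) - μ (s₂ - (m - t))) * ν (m - t)
        = (μ (s₂ - t) - μ (s₁ - t)) * ν (m - t)
    rw [e1, e2, hμ.2.1, hμ.2.1]
  have hkey : ∀ t, 0 ≤ (μ (s₁ - t) - μ (s₂ - t)) * (ν t - ν (m - t)) := by
    intro t
    rcases le_or_gt t (m/2) with h | h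
    · refine mul_nonneg (sub_nonneg.2 (nice_pair hμ ?_)) (sub_nonneg.2 (nice_pair hν ?_))
      · exact abs_le_abs_of_sq (by nlinarith)
      · exact abs_le_abs_of_sq (by nlinarith)
    · have h1 : μ (s₁ - t) - μ (s₂ - t) ≤ 0 :=
        sub_nonpos.2 (nice_pair hμ (abs_le_abs_of_sq (by nlinarith)))
      have h2 : ν t - ν (m - t) ≤ 0 :=
        sub_nonpos.2 (nice_pair hν (abs_le_abs_of_sq (by nlinarith)))
      nlinarith [h1, h2]
  have hItwo : 0 ≤ (∫ t, (μ (s₁ - t) - μ (s₂ - t)) * ν t)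
      + ∫ t, (μ (s₂ - t) - μ (s₁ - t)) * ν (m - t) := by
    rw [← integral_add hintg hinth]
    refine integral_nonneg fun t => ?_
    have h := hkey t
    have hring : (μ (s₁ - t) - μ (s₂ - t)) * ν t + (μ (s₂ - t) - μ (s₁ - t)) * ν (m - t)
        = (μ (s₁ - t) - μ (s₂ - t)) * (ν t - ν (m - t)) := by ring
    show 0 ≤ (μ (s₁ - t) - μ (s₂ - t)) * ν t + (μ (s₂ - t) - μ (s₁ - t)) * ν (m - t)
    rw [hring]
    exact h
  have hI : (∫ t, (μ (s₁ - t) - μ (s₂ - t)) * ν t)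
      = convol μ ν s₁ - convol μ ν s₂ := by
    simp only [convol]
    rw [← integral_sub hint1 hint2]
    refine integral_congr_ae (Filter.Eventually.of_forall fun t => ?_)
    show (μ (s₁ - t) - μ (s₂ - t)) * ν t = μ (s₁ - t) * ν t - μ (s₂ - t) * ν t
    ring
  have hI' : (∫ t, (μ (s₂ - t) - μ (s₁ - t)) * ν (m - t))
      = convol μ ν s₁ - convol μ ν s₂ := by rw [← hswap]; exact hI
  rw [hI, hI'] at hItwo
  linarith

lemma convol_nice {μ ν : ℝ → ℝ} (hμ : Nice μ) (hν : Nice ν) : Nice (convol μ ν) :=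
  ⟨⟨convol_nonneg hμ hν, convol_integral_one hμ hν⟩, convol_even hμ hν,
    convol_continuous hμ hν, convol_antitone hμ hν⟩

/-! ### dot products, matrices -/

lemma measurable_dot {k : ℕ} (a : Fin k → ℝ) : Measurable fun x : Fin k → ℝ => a ⬝ᵥ x := by
  show Measurable fun x : Fin k → ℝ => ∑ j, a j * x j
  exact Finset.measurable_sum _ fun j _ => ((measurable_pi_apply j).const_mul _)

lemma measurable_mulVec {r k : ℕ} (M : Matrix (Fin r) (Fin k) ℝ) :
    Measurable (fun v : Fin k → ℝ => M *ᵥ v) := by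
  refine measurable_pi_lambda _ fun i => ?_
  show Measurable fun v : Fin k → ℝ => ∑ j, M i j * v j
  exact Finset.measurable_sum _ fun j _ => ((measurable_pi_apply j).const_mul _)

lemma dot_self_nonneg {k : ℕ} (v : Fin k → ℝ) : 0 ≤ v ⬝ᵥ v :=
  Finset.sum_nonneg fun i _ => mul_self_nonneg _

lemma dot_MMt {r k : ℕ} (M : Matrix (Fin r) (Fin k) ℝ) (w : Fin r → ℝ) :
    (Mᵀ *ᵥ w) ⬝ᵥ (Mᵀ *ᵥ w) = w ⬝ᵥ ((M * Mᵀ) *ᵥ w) := by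
  rw [dotProduct_mulVec (Mᵀ *ᵥ w) Mᵀ w, ← Matrix.mulVec_transpose Mᵀ, Matrix.transpose_transpose,
    Matrix.mulVec_mulVec, ← dotProduct_comm]

/-! ### tail bound for linear images of sub-spherical densities -/

lemma tail_le_subSpherical {k : ℕ} {γ : ℝ → ℝ} (hγ : Nice γ) {p : (Fin k → ℝ) → ℝ}
    (hsub : SubSpherical γ p) (a : Fin k → ℝ) (ha : a ⬝ᵥ a ≤ 1) {s : ℝ} (hs : 0 < s) :
    Measure.map (fun x => a ⬝ᵥ x) (dMeas p) (Set.Ici s) ≤ dMeas1 γ (Set.Ici s) := by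
  have ham := measurable_dot a
  rw [Measure.map_apply ham measurableSet_Ici]
  by_cases h0 : a = 0
  · have hempty : (fun x : Fin k → ℝ => a ⬝ᵥ x) ⁻¹' Set.Ici s = ∅ := by
      ext x
      simp only [Set.mem_preimage, Set.mem_Ici, Set.mem_empty_iff_false, iff_false, not_le, h0,
        zero_dotProduct]
      exact hs
    rw [hempty, measure_empty]
    exact zero_le
  · have hpos : 0 < a ⬝ᵥ a :=
      lt_of_le_of_ne (dot_self_nonneg a) (Ne.symm fun h => h0 (dotProduct_self_eq_zero.1 h))
    set c := Real.sqrt (a ⬝ᵥ a) with hcdef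
    have hc0 : 0 < c := Real.sqrt_pos.2 hpos
    have hcc : c * c = a ⬝ᵥ a := Real.mul_self_sqrt hpos.le
    have hc1 : c ≤ 1 := Real.sqrt_le_one.2 ha
    set ehat := c⁻¹ • a with hehatdef
    have hehat : ehat ⬝ᵥ ehat = 1 := by
      rw [hehatdef, smul_dotProduct, dotProduct_smul, smul_eq_mul, smul_eq_mul,
        ← hcc]
      field_simp
    have hseteq : (fun x : Fin k → ℝ => a ⬝ᵥ x) ⁻¹' Set.Ici s = {x | s / c ≤ ehat ⬝ᵥ x} := by
      ext x
      simp only [Set.mem_preimage, Set.mem_Ici, Set.mem_setOf_eq, hehatdef,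
        smul_dotProduct, smul_eq_mul]
      have hcinv : c⁻¹ * (a ⬝ᵥ x) * c = a ⬝ᵥ x := by field_simp
      rw [div_le_iff₀ hc0, hcinv]
    rw [hseteq]
    have hmeasset : MeasurableSet {x : Fin k → ℝ | s / c ≤ ehat ⬝ᵥ x} :=
      measurableSet_le measurable_const (measurable_dot ehat)
    have happ : dMeas p {x | s / c ≤ ehat ⬝ᵥ x}
        = ENNReal.ofReal (∫ x in {x | s / c ≤ ehat ⬝ᵥ x}, p x) :=
      withDensity_apply_ofReal hsub.1.1 (integrable_of_integral_one hsub.1.2) hmeasset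
    rw [happ, dMeas1_Ici hγ.1]
    refine ENNReal.ofReal_le_ofReal ?_
    refine le_trans (hsub.2.2 ehat hehat (s / c) (le_of_lt (div_pos hs hc0))) ?_
    refine tailP_antitone hγ.1 ?_
    rw [le_div_iff₀ hc0]
    nlinarith

/-! ### product/tail commute -/

lemma lintegral_tail_comm (σ κ : Measure ℝ) [SFinite σ] [SFinite κ] (δ : ℝ) :
    ∫⁻ x, κ (Set.Ici (δ - x)) ∂σ = ∫⁻ v, σ (Set.Ici (δ - v)) ∂κ := by
  have hmeas : MeasurableSet {z : ℝ × ℝ | δ ≤ z.1 + z.2} :=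
    measurableSet_le measurable_const (measurable_fst.add measurable_snd)
  have h1 : (σ.prod κ) {z : ℝ × ℝ | δ ≤ z.1 + z.2} = ∫⁻ x, κ (Set.Ici (δ - x)) ∂σ := by
    rw [Measure.prod_apply hmeas]
    refine lintegral_congr fun x => ?_
    congr 1
    ext y
    simp only [Set.mem_preimage, Set.mem_setOf_eq, Set.mem_Ici]
    constructor <;> intro h <;> linarith
  have h2 : (σ.prod κ) {z : ℝ × ℝ | δ ≤ z.1 + z.2} = ∫⁻ v, σ (Set.Ici (δ - v)) ∂κ := by
    rw [Measure.prod_apply_symm hmeas]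
    refine lintegral_congr fun v => ?_
    congr 1
    ext x
    simp only [Set.mem_preimage, Set.mem_setOf_eq, Set.mem_Ici]
    constructor <;> intro h <;> linarith
  rw [← h1, h2]

/-! ### final identification -/

lemma final_eq {μ ν : ℝ → ℝ} (hμ : Nice μ) (hν : Nice ν) (δ : ℝ) :
    ∫⁻ v, dMeas1 μ (Set.Ici (δ - v)) ∂(dMeas1 ν) = ENNReal.ofReal (tailP (convol μ ν) δ) := by
  have hmν : Measurable fun v : ℝ => ENNReal.ofReal (ν v) :=
    ENNReal.measurable_ofReal.comp hν.2.2.1.measurable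
  have htm : Monotone fun v : ℝ => tailP μ (δ - v) := by
    intro v₁ v₂ h
    exact tailP_antitone hμ.1 (by linarith)
  have hg : Measurable fun v : ℝ => ENNReal.ofReal (tailP μ (δ - v)) :=
    ENNReal.measurable_ofReal.comp htm.measurable
  have h1 : ∀ v : ℝ, dMeas1 μ (Set.Ici (δ - v)) = ENNReal.ofReal (tailP μ (δ - v)) :=
    fun v => dMeas1_Ici hμ.1 _
  rw [lintegral_congr h1]
  rw [dMeas1, lintegral_withDensity_eq_lintegral_mul volume hmν hg]
  have h2 : ∀ v : ℝ, ((fun v => ENNReal.ofReal (ν v)) * fun v =>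
      ENNReal.ofReal (tailP μ (δ - v))) v = ENNReal.ofReal (tailP μ (δ - v) * ν v) := by
    intro v
    simp only [Pi.mul_apply]
    rw [← ENNReal.ofReal_mul (hν.1.1 v), mul_comm (ν v) (tailP μ (δ - v))]
  rw [lintegral_congr h2]
  have hint : Integrable fun v => tailP μ (δ - v) * ν v := by
    refine Integrable.bdd_mul (nice_integrable hν) htm.measurable.aestronglyMeasurable
      (c := 1) (Filter.Eventually.of_forall fun v => ?_)
    rw [Real.norm_eq_abs, abs_of_nonneg (tailP_nonneg hμ.1.1 _)]
    exact tailP_le_one hμ.1 _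
  rw [← ofReal_integral_eq_lintegral_ofReal hint (Filter.Eventually.of_forall fun v =>
    mul_nonneg (tailP_nonneg hμ.1.1 _) (hν.1.1 v))]
  rw [tailP_convol hμ hν δ]

end S3

set_option maxHeartbeats 2000000 in
theorem statement3 {n m r : ℕ}
    (μ ν : ℝ → ℝ) (hμ : Nice μ) (hν : Nice ν)
    (Pn : Set ((Fin n → ℝ) → ℝ)) (hPn : ∀ p ∈ Pn, SubSpherical μ p)
    (Pm : Set ((Fin m → ℝ) → ℝ)) (hPm : CompMonotone ν Pm)
    (A : Matrix (Fin r) (Fin n) ℝ) (B : Matrix (Fin r) (Fin m) ℝ)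
    (Θ : Matrix (Fin r) (Fin r) ℝ) (hΘ : Θ.PosDef)
    (hA : (Θ * Θ - A * Aᵀ).PosSemidef) (hB : (Θ * Θ - B * Bᵀ).PosSemidef)
    (hAB : (A * Aᵀ + B * Bᵀ).PosDef)
    (p : (Fin n → ℝ) → ℝ) (hp : p ∈ Pn)
    (q : (Fin m → ℝ) → ℝ) (hq : q ∈ Pm)
    (μξ : Measure (Fin r → ℝ))
    (hμξ : μξ = Measure.map
      (fun z : (Fin n → ℝ) × (Fin m → ℝ) => Θ⁻¹ *ᵥ (A *ᵥ z.1 + B *ᵥ z.2))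
      ((dMeas p).prod (dMeas q))) :
    Nice (convol μ ν) ∧
    (∀ e : Fin r → ℝ, e ⬝ᵥ e = 1 → ∀ δ : ℝ, 0 ≤ δ →
      μξ {ξ | δ ≤ e ⬝ᵥ ξ} ≤ ENNReal.ofReal (tailP (convol μ ν) δ)) ∧
    (∀ e : Fin r → ℝ, e ⬝ᵥ e = 1 →
      ∃ f : ℝ → ℝ, IsDensity1 f ∧ (∀ s, f (-s) = f s) ∧
        Measure.map (fun ξ => e ⬝ᵥ ξ) μξ = dMeas1 f) ∧
    (∃ ρ : (Fin r → ℝ) → ℝ, SubSpherical (convol μ ν) ρ ∧ μξ = dMeas ρ) := by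
  subst hμξ
  obtain ⟨hνnice, hsubPm, hcm⟩ := hPm
  have hsp := hPn p hp
  have hsq := hsubPm q hq
  have hpint : Integrable p := S3.integrable_of_integral_one hsp.1.2
  have hqint : Integrable q := S3.integrable_of_integral_one hsq.1.2
  haveI hPp : IsProbabilityMeasure (dMeas p) := S3.isProb_withDensity hsp.1.1 hsp.1.2
  haveI hPq : IsProbabilityMeasure (dMeas q) := S3.isProb_withDensity hsq.1.1 hsq.1.2
  haveI hPm1 : IsProbabilityMeasure (dMeas1 μ) := S3.dMeas1_isProb hμ.1
  haveI hPm2 : IsProbabilityMeasure (dMeas1 ν) := S3.dMeas1_isProb hν.1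
  -- symmetry of the basic measures
  have hsymp : Measure.map (fun x : Fin n → ℝ => -x) (dMeas p) = dMeas p := by
    rw [dMeas, S3.map_neg_withDensity hpint.aemeasurable.ennreal_ofReal]
    congr 1
    funext x
    rw [hsp.2.1 x]
  have hsymq : Measure.map (fun x : Fin m → ℝ => -x) (dMeas q) = dMeas q := by
    rw [dMeas, S3.map_neg_withDensity hqint.aemeasurable.ennreal_ofReal]
    congr 1
    funext x
    rw [hsq.2.1 x]
  have hsymm1 : Measure.map (fun t : ℝ => -t) (dMeas1 μ) = dMeas1 μ := by
    rw [dMeas1, S3.map_neg_withDensity (S3.nice_integrable hμ).aemeasurable.ennreal_ofReal]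
    congr 1
    funext t
    rw [hμ.2.1 t]
  have hsymm2 : Measure.map (fun t : ℝ => -t) (dMeas1 ν) = dMeas1 ν := by
    rw [dMeas1, S3.map_neg_withDensity (S3.nice_integrable hν).aemeasurable.ennreal_ofReal]
    congr 1
    funext t
    rw [hν.2.1 t]
  -- the linear map
  set T₀ : (Fin n → ℝ) × (Fin m → ℝ) → (Fin r → ℝ) :=
    fun z => Θ⁻¹ *ᵥ (A *ᵥ z.1 + B *ᵥ z.2) with hT₀def
  have hT₀m : Measurable T₀ :=
    (S3.measurable_mulVec Θ⁻¹).comp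
      (((S3.measurable_mulVec A).comp measurable_fst).add
        ((S3.measurable_mulVec B).comp measurable_snd))
  haveI : IsProbabilityMeasure (Measure.map T₀ ((dMeas p).prod (dMeas q))) :=
    Measure.isProbabilityMeasure_map hT₀m.aemeasurable
  -- matrix facts
  have hΘT : Θᵀ = Θ := by
    have h2 : Θᴴ = Θᵀ := by
      ext i j; simp [Matrix.conjTranspose_apply]
    rw [← h2, hΘ.1]
  have hdet : IsUnit Θ.det := isUnit_iff_ne_zero.2 (ne_of_gt hΘ.det_pos)
  have hABdet : IsUnit (A * Aᵀ + B * Bᵀ).det := isUnit_iff_ne_zero.2 (ne_of_gt hAB.det_pos)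
  have hT₀add : ∀ x y, T₀ (x + y) = T₀ x + T₀ y := by
    intro x y
    simp only [hT₀def, Prod.fst_add, Prod.snd_add, Matrix.mulVec_add]
    abel
  set SAB : (Fin r → ℝ) → (Fin n → ℝ) × (Fin m → ℝ) :=
    fun v => (Aᵀ *ᵥ ((A * Aᵀ + B * Bᵀ)⁻¹ *ᵥ (Θ *ᵥ v)),
      Bᵀ *ᵥ ((A * Aᵀ + B * Bᵀ)⁻¹ *ᵥ (Θ *ᵥ v))) with hSABdef
  have hSABm : Measurable SAB := by
    refine Measurable.prodMk ?_ ?_ <;>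
      exact (S3.measurable_mulVec _).comp
        ((S3.measurable_mulVec _).comp (S3.measurable_mulVec _))
  have hT₀S : ∀ v, T₀ (SAB v) = v := by
    intro v
    have key : ∀ uu : Fin r → ℝ,
        A *ᵥ (Aᵀ *ᵥ uu) + B *ᵥ (Bᵀ *ᵥ uu) = (A * Aᵀ + B * Bᵀ) *ᵥ uu := by
      intro uu
      rw [Matrix.mulVec_mulVec, Matrix.mulVec_mulVec, ← Matrix.add_mulVec]
    show Θ⁻¹ *ᵥ (A *ᵥ (Aᵀ *ᵥ ((A * Aᵀ + B * Bᵀ)⁻¹ *ᵥ (Θ *ᵥ v))) +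
        B *ᵥ (Bᵀ *ᵥ ((A * Aᵀ + B * Bᵀ)⁻¹ *ᵥ (Θ *ᵥ v)))) = v
    rw [key, Matrix.mulVec_mulVec, Matrix.mulVec_mulVec, Matrix.mulVec_mulVec]
    have hmat : ((Θ⁻¹ * (A * Aᵀ + B * Bᵀ)) * (A * Aᵀ + B * Bᵀ)⁻¹) * Θ = 1 := by
      rw [Matrix.mul_assoc Θ⁻¹, Matrix.mul_nonsing_inv _ hABdet, Matrix.mul_one,
        Matrix.nonsing_inv_mul _ hdet]
    rw [hmat, Matrix.one_mulVec]
  -- absolute continuity of μξ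
  have hμξac : Measure.map T₀ ((dMeas p).prod (dMeas q)) ≪ (volume : Measure (Fin r → ℝ)) := by
    refine Measure.AbsolutelyContinuous.mk fun s hs h0 => ?_
    rw [Measure.map_apply hT₀m hs]
    have hpq : (dMeas p).prod (dMeas q)
        ≪ ((volume : Measure (Fin n → ℝ)).prod (volume : Measure (Fin m → ℝ))) :=
      Measure.AbsolutelyContinuous.prod (withDensity_absolutelyContinuous _ _)
        (withDensity_absolutelyContinuous _ _)
    refine hpq ?_
    exact S3.null_preimage _ volume
      (IsOpen.measure_ne_zero volume isOpen_univ Set.univ_nonempty) hT₀m hSABm hT₀add hT₀S h0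
  -- symmetry of μξ
  have hsymprod : Measure.map (fun z : (Fin n → ℝ) × (Fin m → ℝ) => -z)
      ((dMeas p).prod (dMeas q)) = (dMeas p).prod (dMeas q) := by
    have hnegeq : (fun z : (Fin n → ℝ) × (Fin m → ℝ) => -z)
        = Prod.map (fun x : Fin n → ℝ => -x) (fun y : Fin m → ℝ => -y) := rfl
    rw [hnegeq, ← Measure.map_prod_map _ _ measurable_neg measurable_neg, hsymp, hsymq]
  have hμξsym : Measure.map (fun x : Fin r → ℝ => -x)
      (Measure.map T₀ ((dMeas p).prod (dMeas q)))
      = Measure.map T₀ ((dMeas p).prod (dMeas q)) := by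
    rw [Measure.map_map measurable_neg hT₀m]
    have hcomm : ((fun x : Fin r → ℝ => -x) ∘ T₀)
        = T₀ ∘ (fun z : (Fin n → ℝ) × (Fin m → ℝ) => -z) := by
      funext z
      simp only [Function.comp_apply, hT₀def]
      rw [show (-z : (Fin n → ℝ) × (Fin m → ℝ)).1 = -z.1 from rfl,
        show (-z : (Fin n → ℝ) × (Fin m → ℝ)).2 = -z.2 from rfl,
        Matrix.mulVec_neg, Matrix.mulVec_neg, ← neg_add, Matrix.mulVec_neg]
    rw [hcomm, ← Measure.map_map hT₀m measurable_neg, hsymprod]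
  -- Part 2
  have key2 : ∀ e : Fin r → ℝ, e ⬝ᵥ e = 1 → ∀ δ : ℝ, 0 ≤ δ →
      Measure.map T₀ ((dMeas p).prod (dMeas q)) {ξ | δ ≤ e ⬝ᵥ ξ}
        ≤ ENNReal.ofReal (tailP (convol μ ν) δ) := by
    intro e he δ hδ
    set w := Θ⁻¹ *ᵥ e with hwdef
    have hΘw : Θ *ᵥ w = e := by
      rw [hwdef, Matrix.mulVec_mulVec, Matrix.mul_nonsing_inv _ hdet, Matrix.one_mulVec]
    set a := Aᵀ *ᵥ w with hadef
    set b := Bᵀ *ᵥ w with hbdef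
    have hvecmul : e ᵥ* Θ⁻¹ = w := by
      rw [← Matrix.mulVec_transpose, Matrix.transpose_nonsing_inv, hΘT, hwdef]
    have hid : ∀ z : (Fin n → ℝ) × (Fin m → ℝ), e ⬝ᵥ T₀ z = a ⬝ᵥ z.1 + b ⬝ᵥ z.2 := by
      intro z
      simp only [hT₀def]
      rw [Matrix.dotProduct_mulVec, hvecmul, dotProduct_add,
        Matrix.dotProduct_mulVec w A, Matrix.dotProduct_mulVec w B,
        ← Matrix.mulVec_transpose A, ← Matrix.mulVec_transpose B]
    have hΘquad : w ⬝ᵥ ((Θ * Θ) *ᵥ w) = 1 := by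
      rw [← Matrix.mulVec_mulVec, hΘw, Matrix.dotProduct_mulVec, ← Matrix.mulVec_transpose,
        hΘT, hΘw]
      exact he
    have haa : a ⬝ᵥ a ≤ 1 := by
      have h0 : 0 ≤ w ⬝ᵥ ((Θ * Θ - A * Aᵀ) *ᵥ w) := by simpa using hA.dotProduct_mulVec_nonneg w
      rw [Matrix.sub_mulVec, dotProduct_sub, hΘquad] at h0
      rw [hadef, S3.dot_MMt A w]
      linarith
    have hbb : b ⬝ᵥ b ≤ 1 := by
      have h0 : 0 ≤ w ⬝ᵥ ((Θ * Θ - B * Bᵀ) *ᵥ w) := by simpa using hB.dotProduct_mulVec_nonneg w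
      rw [Matrix.sub_mulVec, dotProduct_sub, hΘquad] at h0
      rw [hbdef, S3.dot_MMt B w]
      linarith
    have hw0 : w ≠ 0 := by
      intro h
      have he' := he
      rw [← hΘw, h, Matrix.mulVec_zero, zero_dotProduct] at he'
      norm_num at he'
    have hsum_pos : 0 < a ⬝ᵥ a + b ⬝ᵥ b := by
      have h0 : 0 < w ⬝ᵥ ((A * Aᵀ + B * Bᵀ) *ᵥ w) := by simpa using hAB.dotProduct_mulVec_pos hw0
      rw [Matrix.add_mulVec, dotProduct_add] at h0
      rw [hadef, hbdef, S3.dot_MMt A w, S3.dot_MMt B w]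
      linarith
    have ham : Measurable fun x : Fin n → ℝ => a ⬝ᵥ x := S3.measurable_dot a
    have hbm : Measurable fun y : Fin m → ℝ => b ⬝ᵥ y := S3.measurable_dot b
    set lam1 := Measure.map (fun x : Fin n → ℝ => a ⬝ᵥ x) (dMeas p) with hl1
    set lam2 := Measure.map (fun y : Fin m → ℝ => b ⬝ᵥ y) (dMeas q) with hl2
    haveI : IsProbabilityMeasure lam1 := Measure.isProbabilityMeasure_map ham.aemeasurable
    haveI : IsProbabilityMeasure lam2 := Measure.isProbabilityMeasure_map hbm.aemeasurable
    have hsym1 : Measure.map (fun t : ℝ => -t) lam1 = lam1 := by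
      rw [hl1, Measure.map_map measurable_neg ham]
      have hcm1 : ((fun t : ℝ => -t) ∘ fun x : Fin n → ℝ => a ⬝ᵥ x)
          = (fun x : Fin n → ℝ => a ⬝ᵥ x) ∘ (fun x : Fin n → ℝ => -x) := by
        funext x; simp [dotProduct_neg]
      rw [hcm1, ← Measure.map_map ham measurable_neg, hsymp]
    have hsym2 : Measure.map (fun t : ℝ => -t) lam2 = lam2 := by
      rw [hl2, Measure.map_map measurable_neg hbm]
      have hcm2 : ((fun t : ℝ => -t) ∘ fun y : Fin m → ℝ => b ⬝ᵥ y)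
          = (fun y : Fin m → ℝ => b ⬝ᵥ y) ∘ (fun y : Fin m → ℝ => -y) := by
        funext y; simp [dotProduct_neg]
      rw [hcm2, ← Measure.map_map hbm measurable_neg, hsymq]
    have tails1 : ∀ s : ℝ, 0 < s → lam1 (Set.Ici s) ≤ dMeas1 μ (Set.Ici s) :=
      fun s hs => S3.tail_le_subSpherical hμ hsp a haa hs
    have tails2 : ∀ s : ℝ, 0 < s → lam2 (Set.Ici s) ≤ dMeas1 ν (Set.Ici s) :=
      fun s hs => S3.tail_le_subSpherical hν hsq b hbb hs
    have hsetr : MeasurableSet {ξ : Fin r → ℝ | δ ≤ e ⬝ᵥ ξ} :=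
      measurableSet_le measurable_const (S3.measurable_dot e)
    have hsetz : MeasurableSet {z : (Fin n → ℝ) × (Fin m → ℝ) | δ ≤ a ⬝ᵥ z.1 + b ⬝ᵥ z.2} :=
      measurableSet_le measurable_const ((ham.comp measurable_fst).add (hbm.comp measurable_snd))
    have step0 : Measure.map T₀ ((dMeas p).prod (dMeas q)) {ξ | δ ≤ e ⬝ᵥ ξ}
        = ∫⁻ u, lam2 (Set.Ici (δ - u)) ∂lam1 := by
      rw [Measure.map_apply hT₀m hsetr]
      have hpre : T₀ ⁻¹' {ξ | δ ≤ e ⬝ᵥ ξ}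
          = {z : (Fin n → ℝ) × (Fin m → ℝ) | δ ≤ a ⬝ᵥ z.1 + b ⬝ᵥ z.2} := by
        ext z
        simp only [Set.mem_preimage, Set.mem_setOf_eq]
        rw [← hid z]
      rw [hpre, Measure.prod_apply hsetz]
      have hsec : ∀ x : Fin n → ℝ,
          (dMeas q) (Prod.mk x ⁻¹' {z : (Fin n → ℝ) × (Fin m → ℝ) | δ ≤ a ⬝ᵥ z.1 + b ⬝ᵥ z.2})
          = lam2 (Set.Ici (δ - a ⬝ᵥ x)) := by
        intro x
        rw [hl2, Measure.map_apply hbm measurableSet_Ici]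
        congr 1
        ext y
        simp only [Set.mem_preimage, Set.mem_setOf_eq, Set.mem_Ici]
        constructor <;> intro h <;> linarith
      rw [lintegral_congr hsec, hl1,
        lintegral_map ((S3.meas_tail_monotone lam2 δ).measurable) ham]
    by_cases hb0 : b = 0
    · -- degenerate branch
      have haa_pos : 0 < a ⬝ᵥ a := by
        rw [hb0, zero_dotProduct] at hsum_pos
        linarith
      have ha0 : a ≠ 0 := fun h => by
        rw [h, zero_dotProduct] at haa_pos
        exact lt_irrefl _ haa_pos
      have heval : ∀ u : ℝ, lam2 (Set.Ici (δ - u))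
          = (Set.Ici δ).indicator (fun _ => (1:ENNReal)) u := by
        intro u
        rw [hl2, Measure.map_apply hbm measurableSet_Ici]
        by_cases hu : δ ≤ u
        · have hpre : (fun y : Fin m → ℝ => b ⬝ᵥ y) ⁻¹' Set.Ici (δ - u) = Set.univ := by
            ext y
            simp only [Set.mem_preimage, Set.mem_Ici, Set.mem_univ, iff_true, hb0,
              zero_dotProduct]
            linarith
          rw [hpre, measure_univ, Set.indicator_of_mem (Set.mem_Ici.2 hu)]
        · have hpre : (fun y : Fin m → ℝ => b ⬝ᵥ y) ⁻¹' Set.Ici (δ - u) = ∅ := by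
            ext y
            simp only [Set.mem_preimage, Set.mem_Ici, Set.mem_empty_iff_false, iff_false,
              not_le, hb0, zero_dotProduct]
            push_neg at hu
            linarith
          rw [hpre, measure_empty, Set.indicator_of_notMem (by simpa using hu)]
      have hstep : ∫⁻ u, lam2 (Set.Ici (δ - u)) ∂lam1 = lam1 (Set.Ici δ) := by
        rw [lintegral_congr heval]
        exact lintegral_indicator_one measurableSet_Ici
      have hlam10 : lam1 {(0:ℝ)} = 0 := by
        rw [hl1, Measure.map_apply ham (measurableSet_singleton 0)]
        refine (withDensity_absolutelyContinuous volume _) ?_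
        refine S3.null_preimage volume volume
          (IsOpen.measure_ne_zero volume isOpen_univ Set.univ_nonempty) ham
          (S := fun t : ℝ => (t * (a ⬝ᵥ a)⁻¹) • a)
          ((measurable_id.mul_const _).smul_const _) ?_ ?_ Real.volume_singleton
        · intro x y; exact dotProduct_add a x y
        · intro t
          rw [dotProduct_smul, smul_eq_mul, mul_assoc, inv_mul_cancel₀ (ne_of_gt haa_pos),
            mul_one]
      have hl1le : lam1 (Set.Ici δ) ≤ dMeas1 μ (Set.Ici δ) := by
        rcases eq_or_lt_of_le hδ with hδ0 | hδpos
        · rw [← hδ0, S3.symm_Ici_zero hsym1 hlam10,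
            S3.symm_Ici_zero hsymm1 (S3.dMeas1_singleton μ 0)]
        · exact tails1 δ hδpos
      have hdirac : dMeas1 μ (Set.Ici δ)
          = ∫⁻ v, dMeas1 μ (Set.Ici (δ - v)) ∂(Measure.dirac (0:ℝ)) := by
        rw [lintegral_dirac (0:ℝ) (fun v => dMeas1 μ (Set.Ici (δ - v))), sub_zero]
      have hlast : (∫⁻ v, dMeas1 μ (Set.Ici (δ - v)) ∂(Measure.dirac (0:ℝ)))
          ≤ ∫⁻ v, dMeas1 μ (Set.Ici (δ - v)) ∂(dMeas1 ν) := by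
        refine S3.lemA _ _ _ ?_ hsymm2 (S3.dMeas1_singleton ν) ?_ (S3.Hmono_nice hμ hδ)
        · rw [Measure.map_dirac' measurable_neg, neg_zero]
        · intro s hs
          rw [Measure.dirac_apply' 0 measurableSet_Ici]
          rw [Set.indicator_of_notMem (by simpa using hs)]
          exact zero_le
      calc Measure.map T₀ ((dMeas p).prod (dMeas q)) {ξ | δ ≤ e ⬝ᵥ ξ}
          = lam1 (Set.Ici δ) := by rw [step0, hstep]
        _ ≤ dMeas1 μ (Set.Ici δ) := hl1le
        _ = ∫⁻ v, dMeas1 μ (Set.Ici (δ - v)) ∂(Measure.dirac (0:ℝ)) := hdirac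
        _ ≤ ∫⁻ v, dMeas1 μ (Set.Ici (δ - v)) ∂(dMeas1 ν) := hlast
        _ = ENNReal.ofReal (tailP (convol μ ν) δ) := S3.final_eq hμ hν δ
    · -- main branch
      have hbbpos : 0 < b ⬝ᵥ b :=
        lt_of_le_of_ne (S3.dot_self_nonneg b)
          (fun h => hb0 (dotProduct_self_eq_zero.1 h.symm))
      set c := Real.sqrt (b ⬝ᵥ b) with hcdef
      have hc0 : 0 < c := Real.sqrt_pos.2 hbbpos
      have hcc : c * c = b ⬝ᵥ b := Real.mul_self_sqrt hbbpos.le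
      set ehat := c⁻¹ • b with hehatdef
      have hehat1 : ehat ⬝ᵥ ehat = 1 := by
        rw [hehatdef, smul_dotProduct, dotProduct_smul, smul_eq_mul, smul_eq_mul,
          ← hcc]
        field_simp
      obtain ⟨f₀, hf₀nice, hf₀map⟩ := hcm q hq ehat hehat1
      have hbeq : (fun y : Fin m → ℝ => b ⬝ᵥ y)
          = (fun t : ℝ => c * t) ∘ (fun y : Fin m → ℝ => ehat ⬝ᵥ y) := by
        funext y
        simp only [Function.comp_apply, hehatdef, smul_dotProduct, smul_eq_mul]
        rw [← mul_assoc, mul_inv_cancel₀ (ne_of_gt hc0), one_mul]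
      have hlam2eq : ∀ u : ℝ, lam2 (Set.Ici u) = dMeas1 f₀ (Set.Ici (u / c)) := by
        intro u
        rw [hl2, hbeq, ← Measure.map_map (measurable_const_mul c) (S3.measurable_dot ehat),
          hf₀map, Measure.map_apply (measurable_const_mul c) measurableSet_Ici]
        congr 1
        ext t
        simp only [Set.mem_preimage, Set.mem_Ici]
        rw [div_le_iff₀ hc0]
        constructor <;> intro h <;> nlinarith
      have hHmono2 : MonotoneOn (fun x => lam2 (Set.Ici (δ - x)) + lam2 (Set.Ici (δ + x)))
          (Set.Ici (0:ℝ)) := by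
        intro x₁ h1 x₂ h2 h12
        simp only [Set.mem_Ici] at h1 h2
        have hδc : 0 ≤ δ / c := div_nonneg hδ hc0.le
        have hm := S3.Hmono_nice hf₀nice hδc (Set.mem_Ici.2 (div_nonneg h1 hc0.le))
          (Set.mem_Ici.2 (div_nonneg h2 hc0.le)) (by
            rw [div_le_div_iff_of_pos_right hc0]
            nlinarith)
        simp only
        rw [hlam2eq, hlam2eq, hlam2eq, hlam2eq]
        simpa [sub_div, add_div] using hm
      calc Measure.map T₀ ((dMeas p).prod (dMeas q)) {ξ | δ ≤ e ⬝ᵥ ξ}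
          = ∫⁻ u, lam2 (Set.Ici (δ - u)) ∂lam1 := step0
        _ ≤ ∫⁻ u, lam2 (Set.Ici (δ - u)) ∂(dMeas1 μ) :=
            S3.lemA lam1 (dMeas1 μ) lam2 hsym1 hsymm1 (S3.dMeas1_singleton μ) tails1 hHmono2
        _ = ∫⁻ v, dMeas1 μ (Set.Ici (δ - v)) ∂lam2 := S3.lintegral_tail_comm _ _ δ
        _ ≤ ∫⁻ v, dMeas1 μ (Set.Ici (δ - v)) ∂(dMeas1 ν) :=
            S3.lemA lam2 (dMeas1 ν) (dMeas1 μ) hsym2 hsymm2 (S3.dMeas1_singleton ν) tails2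
              (S3.Hmono_nice hμ hδ)
        _ = ENNReal.ofReal (tailP (convol μ ν) δ) := S3.final_eq hμ hν δ
  refine ⟨S3.convol_nice hμ hν, key2, ?_, ?_⟩
  · -- Part 3
    intro e he
    set L := Measure.map (fun ξ : Fin r → ℝ => e ⬝ᵥ ξ)
      (Measure.map T₀ ((dMeas p).prod (dMeas q))) with hLdef
    haveI : IsProbabilityMeasure L := Measure.isProbabilityMeasure_map (S3.measurable_dot e).aemeasurable
    have hLac : L ≪ (volume : Measure ℝ) := by
      refine Measure.AbsolutelyContinuous.mk fun s hs h0 => ?_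
      rw [hLdef, Measure.map_apply (S3.measurable_dot e) hs]
      refine hμξac ?_
      refine S3.null_preimage volume volume
        (IsOpen.measure_ne_zero volume isOpen_univ Set.univ_nonempty) (S3.measurable_dot e)
        (S := fun t : ℝ => t • e) (measurable_id.smul_const e) ?_ ?_ h0
      · intro x y; exact dotProduct_add e x y
      · intro t; rw [dotProduct_smul, smul_eq_mul, he, mul_one]
    have hLsym : Measure.map (fun t : ℝ => -t) L = L := by
      rw [hLdef, Measure.map_map measurable_neg (S3.measurable_dot e)]
      have hcm3 : ((fun t : ℝ => -t) ∘ fun ξ : Fin r → ℝ => e ⬝ᵥ ξ)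
          = (fun ξ : Fin r → ℝ => e ⬝ᵥ ξ) ∘ (fun ξ : Fin r → ℝ => -ξ) := by
        funext ξ; simp [dotProduct_neg]
      rw [hcm3, ← Measure.map_map (S3.measurable_dot e) measurable_neg, hμξsym]
    obtain ⟨f, hfm, hf0, hfe, hfint, hfeq⟩ := S3.exists_even_density volume L hLac hLsym
    exact ⟨f, ⟨hf0, hfint⟩, hfe, hfeq⟩
  · -- Part 4
    obtain ⟨ρ, hρm, hρ0, hρe, hρint, hρeq⟩ := S3.exists_even_density volume
      (Measure.map T₀ ((dMeas p).prod (dMeas q))) hμξac hμξsym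
    refine ⟨ρ, ⟨⟨hρ0, hρint⟩, hρe, ?_⟩, hρeq⟩
    intro e he δ hδ
    have hset : MeasurableSet {ξ : Fin r → ℝ | δ ≤ e ⬝ᵥ ξ} :=
      measurableSet_le measurable_const (S3.measurable_dot e)
    have h1 : ∫ ξ in {ξ | δ ≤ e ⬝ᵥ ξ}, ρ ξ
        = ((Measure.map T₀ ((dMeas p).prod (dMeas q))) {ξ | δ ≤ e ⬝ᵥ ξ}).toReal := by
      rw [integral_eq_lintegral_of_nonneg_ae (Filter.Eventually.of_forall hρ0)
        hρm.aestronglyMeasurable.restrict]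
      congr 1
      rw [hρeq, withDensity_apply _ hset]
    rw [h1]
    calc ((Measure.map T₀ ((dMeas p).prod (dMeas q))) {ξ | δ ≤ e ⬝ᵥ ξ}).toReal
        ≤ (ENNReal.ofReal (tailP (convol μ ν) δ)).toReal :=
          ENNReal.toReal_mono ENNReal.ofReal_ne_top (key2 e he δ hδ)
      _ = tailP (convol μ ν) δ :=
          ENNReal.toReal_ofReal (S3.tailP_nonneg (S3.convol_nonneg hμ hν) δ)
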